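/- Let R be a unital associative algebra over ℂ, let u ∈ ℂ with |u| = 1 and u ≠ 1 and u ≠ −1, and set m = i(1+u)/(1−u) (a nonzero real number, equal to −cot(α/2) when u = e^{iα}). Let A, B ∈ R with B invertible, and suppose A − B = (1/2)(u − 1)(1 + B)(1 − A). If −iB + m·1 and −iB^{-1} − m^{-1}·1 are both invertible in R, then A = −i(−iB + m·1)^{-1} − i(−iB^{-1} − m^{-1}·1)^{-1}. -/

import Mathlib

/-- The algebraic identity (fmb estimate 2): with `m = i(1+u)/(1−u)` and
`A − B = ½(u−1)(1+B)(1−A)`, one has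
`A = −i(−iB + m)⁻¹ − i(−iB⁻¹ − m⁻¹)⁻¹`. -/
theorem stmt_19 {R : Type*} [Ring R] [Algebra ℂ R]
    (u : ℂ) (hu : ‖u‖ = 1) (hu1 : u ≠ 1) (hu2 : u ≠ -1)
    (m : ℂ) (hm : m = Complex.I * (1 + u) / (1 - u))
    (A B : R) (hB : IsUnit B)
    (hAB : A - B = ((u - 1) / 2) • ((1 + B) * (1 - A)))
    (h1 : IsUnit ((-Complex.I) • B + m • (1 : R)))
    (h2 : IsUnit ((-Complex.I) • Ring.inverse B - m⁻¹ • (1 : R))) :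
    A = (-Complex.I) • Ring.inverse ((-Complex.I) • B + m • (1 : R))
      + (-Complex.I) • Ring.inverse ((-Complex.I) • Ring.inverse B - m⁻¹ • (1 : R)) := by
  have hu1' : (1:ℂ) - u ≠ 0 := sub_ne_zero.mpr fun h => hu1 h.symm
  have hu2' : (1:ℂ) + u ≠ 0 := fun h => hu2 (by linear_combination h)
  have hm0 : m ≠ 0 := by
    rw [hm]; exact div_ne_zero (mul_ne_zero Complex.I_ne_zero hu2') hu1'
  set X := (-Complex.I) • B + m • (1 : R) with hXdef
  set Y := (-Complex.I) • Ring.inverse B - m⁻¹ • (1 : R) with hYdef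
  have hBB : B * Ring.inverse B = 1 := Ring.mul_inverse_cancel B hB
  have hXX : X * Ring.inverse X = 1 := Ring.mul_inverse_cancel X h1
  have hYY : Y * Ring.inverse Y = 1 := Ring.mul_inverse_cancel Y h2
  have key : X = (Complex.I * m) • (B * Y) := by
    rw [hXdef, hYdef, mul_sub, mul_smul_comm, mul_smul_comm, hBB, mul_one]
    match_scalars
    · field_simp
    · field_simp; linear_combination Complex.I_sq
  have hE : (1:R) + ((u-1)/2) • (1+B) = ((Complex.I*(u-1))/2) • X := by
    rw [hXdef]
    match_scalars
    · field_simp [hm]; ring_nf; have hm' : m*(1-u) = Complex.I*(1+u) := by rw [hm, div_mul_cancel₀ _ hu1']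
      linear_combination Complex.I * hm' + (1+u) * Complex.I_sq
    · field_simp [hm]; ring_nf; linear_combination Complex.I_sq
  have hEA : ((1:R) + ((u-1)/2) • (1+B)) * A = B + ((u-1)/2) • (1+B) := by
    have h : A - B = ((u-1)/2) • (1+B) - ((u-1)/2) • ((1+B)*A) := by
      rw [hAB, mul_sub, mul_one, smul_sub]
    rw [sub_eq_sub_iff_add_eq_add] at h
    rw [add_mul, one_mul, smul_mul_assoc, h, add_comm]
  have hXY : X * Ring.inverse Y = (Complex.I * m) • B := by
    rw [key, smul_mul_assoc, mul_assoc, hYY, mul_one]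
  have hER : ((1:R) + ((u-1)/2) • (1+B)) * ((-Complex.I) • Ring.inverse X + (-Complex.I) • Ring.inverse Y)
      = B + ((u-1)/2) • (1+B) := by
    rw [hE, smul_mul_assoc, mul_add, mul_smul_comm, mul_smul_comm, hXX, hXY]
    match_scalars
    · field_simp [hm]; ring_nf; linear_combination (-1:ℂ) * Complex.I_sq
    · field_simp [hm]; ring_nf; have hm' : m*(1-u) = Complex.I*(1+u) := by rw [hm, div_mul_cancel₀ _ hu1']
      linear_combination Complex.I^3 * hm' + (1+u)*(Complex.I^2-1) * Complex.I_sq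
  have hd : IsUnit ((algebraMap ℂ R) (Complex.I*(u-1)/2)) := by
    refine IsUnit.map _ (isUnit_iff_ne_zero.mpr ?_)
    exact div_ne_zero (mul_ne_zero Complex.I_ne_zero (sub_ne_zero.mpr hu1)) two_ne_zero
  have hE_unit : IsUnit ((1:R) + ((u-1)/2) • (1+B)) := by
    rw [hE, Algebra.smul_def]; exact hd.mul h1
  exact hE_unit.mul_left_cancel (hEA.trans hER.symm)
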